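/- For all r > 0, the derivative of r ↦ K₀(r) + log r is strictly positive, i.e. K₀'(r) + 1/r > 0. -/

import Mathlib

open Real Set MeasureTheory

lemma aux_integral_bound {r : ℝ} (hr : 0 < r) :
    (∫ s in Set.Ioi (0 : ℝ), Real.exp (-r * s) * Real.sqrt (s ^ 2 + 2 * s)) ≤
      1 / r ^ 2 + 1 / r := by
  have hint1 : ∫ t : ℝ in Ioi 0, t ^ ((2:ℝ) - 1) * exp (-(r * t)) = (1 / r) ^ (2:ℝ) * Gamma 2 :=
    integral_rpow_mul_exp_neg_mul_Ioi (by norm_num) hr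
  have hint2 : ∫ t : ℝ in Ioi 0, t ^ ((1:ℝ) - 1) * exp (-(r * t)) = (1 / r) ^ (1:ℝ) * Gamma 1 :=
    integral_rpow_mul_exp_neg_mul_Ioi (by norm_num) hr
  have hi1 : IntegrableOn (fun t : ℝ => t * exp (-(r * t))) (Ioi 0) := by
    have := integrableOn_rpow_mul_exp_neg_mul_rpow (p := 1) (s := 1) (b := r)
      (by norm_num) one_pos hr
    refine this.congr_fun (fun t ht => ?_) measurableSet_Ioi
    simp [neg_mul]
  have hi2 : IntegrableOn (fun t : ℝ => exp (-(r * t))) (Ioi 0) := by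
    have := exp_neg_integrableOn_Ioi (0 : ℝ) hr
    refine this.congr_fun (fun t ht => ?_) measurableSet_Ioi
    simp [neg_mul]
  have hig : IntegrableOn (fun t : ℝ => (t + 1) * exp (-(r * t))) (Ioi 0) := by
    refine (hi1.add hi2).congr ?_
    filter_upwards with t
    simp only [Pi.add_apply]
    ring
  have hmono : (∫ s in Set.Ioi (0 : ℝ), Real.exp (-r * s) * Real.sqrt (s ^ 2 + 2 * s)) ≤
      ∫ s in Set.Ioi (0 : ℝ), (s + 1) * Real.exp (-(r * s)) := by
    refine integral_mono_of_nonneg ?_ hig ?_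
    · filter_upwards with s
      positivity
    · filter_upwards [ae_restrict_mem measurableSet_Ioi] with s hs
      have hs0 : (0:ℝ) < s := hs
      have hsqrt : Real.sqrt (s ^ 2 + 2 * s) ≤ s + 1 := by
        have : Real.sqrt (s ^ 2 + 2 * s) ≤ Real.sqrt ((s + 1) ^ 2) := by
          apply Real.sqrt_le_sqrt; nlinarith
        rwa [Real.sqrt_sq (by linarith)] at this
      calc Real.exp (-r * s) * Real.sqrt (s ^ 2 + 2 * s)
          ≤ Real.exp (-r * s) * (s + 1) := by
            exact mul_le_mul_of_nonneg_left hsqrt (Real.exp_pos _).le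
        _ = (s + 1) * Real.exp (-(r * s)) := by rw [neg_mul]; ring
  have hval : (∫ s in Set.Ioi (0 : ℝ), (s + 1) * Real.exp (-(r * s))) = 1 / r ^ 2 + 1 / r := by
    have hsplit : (∫ s in Set.Ioi (0 : ℝ), (s + 1) * Real.exp (-(r * s)))
        = (∫ s in Set.Ioi (0 : ℝ), s * Real.exp (-(r * s)))
          + ∫ s in Set.Ioi (0 : ℝ), Real.exp (-(r * s)) := by
      rw [← integral_add hi1 hi2]
      refine setIntegral_congr_fun measurableSet_Ioi (fun t ht => ?_)
      ring
    rw [hsplit]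
    have h1 : (∫ s in Set.Ioi (0 : ℝ), s * Real.exp (-(r * s))) = 1 / r ^ 2 := by
      rw [show (1 / r ^ 2 : ℝ) = (1 / r) ^ (2:ℝ) * Gamma 2 by
        rw [Real.Gamma_two]
        rw [show ((2:ℝ)) = ((2:ℕ) : ℝ) by norm_num, Real.rpow_natCast]
        field_simp]
      rw [← hint1]
      refine setIntegral_congr_fun measurableSet_Ioi (fun t ht => ?_)
      norm_num
    have h2 : (∫ s in Set.Ioi (0 : ℝ), Real.exp (-(r * s))) = 1 / r := by
      rw [show (1 / r : ℝ) = (1 / r) ^ (1:ℝ) * Gamma 1 by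
        rw [Real.Gamma_one, Real.rpow_one, mul_one]]
      rw [← hint2]
      refine setIntegral_congr_fun measurableSet_Ioi (fun t ht => ?_)
      norm_num
    rw [h1, h2]
  calc (∫ s in Set.Ioi (0 : ℝ), Real.exp (-r * s) * Real.sqrt (s ^ 2 + 2 * s))
      ≤ ∫ s in Set.Ioi (0 : ℝ), (s + 1) * Real.exp (-(r * s)) := hmono
    _ = 1 / r ^ 2 + 1 / r := hval

/-- For all `r > 0`, the derivative of `r ↦ K₀(r) + log r` is strictly positive, i.e.
`K₀'(r) + 1/r > 0`, where `K₀'` is given by the integral representation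
`K₀'(r) = −r e^{−r} ∫₀^∞ e^{−rs}(s² + 2s)^{1/2} ds`. -/
theorem besselK0_add_log_deriv_pos (K₀' : ℝ → ℝ)
    (hrep : ∀ r : ℝ, 0 < r →
      K₀' r = -(r * Real.exp (-r) *
        ∫ s in Set.Ioi (0 : ℝ), Real.exp (-r * s) * Real.sqrt (s ^ 2 + 2 * s)))
    (r : ℝ) (hr : 0 < r) :
    0 < K₀' r + 1 / r := by
  rw [hrep r hr]
  have hI := aux_integral_bound hr
  have hbound : r * Real.exp (-r) * (∫ s in Set.Ioi (0 : ℝ),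
      Real.exp (-r * s) * Real.sqrt (s ^ 2 + 2 * s)) ≤
      r * Real.exp (-r) * (1 / r ^ 2 + 1 / r) :=
    mul_le_mul_of_nonneg_left hI (by positivity)
  have hexp : 1 + r < Real.exp r := by
    have := Real.add_one_lt_exp hr.ne'
    linarith
  have hexpneg : Real.exp (-r) * Real.exp r = 1 := by
    rw [← Real.exp_add]; simp
  have hkey : r * Real.exp (-r) * (1 / r ^ 2 + 1 / r) < 1 / r := by
    have he : 0 < Real.exp (-r) := Real.exp_pos _
    have heq : r * Real.exp (-r) * (1 / r ^ 2 + 1 / r) = Real.exp (-r) * (1 + r) / r := by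
      field_simp
    have h2 : Real.exp (-r) * (1 + r) < 1 := by nlinarith
    rw [heq]
    gcongr
  linarith
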